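/- In the Ewens model, ΔW(N,k) = W(N,k+1) − W(N,k) has the closed form ΔW(N,k) = (∏_{j=k+1}^{N−1} j) · ((Σ_{i=k+1}^{N−1} 1/i)·θ − 1) · θ · θ(θ+1)···(θ+k−1). In particular, as a polynomial in θ, ΔW(N,k) has only real roots, and its unique positive root is θ = (Σ_{i=k+1}^{N−1} 1/i)^{−1}. -/

import Mathlib

/-- Number of left-to-right maxima of the permutation `π` (one-line notation
`i ↦ π i`): positions `j` such that `π i < π j` for all `i < j`. -/
def lrmaxCount {N : ℕ} (π : Equiv.Perm (Fin N)) : ℕ :=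
  (Finset.univ.filter (fun j : Fin N => ∀ i, i < j → π i < π j)).card

/-- Number of inversions of `π`: pairs of positions `i < j` with `π i > π j`. -/
def invCount {N : ℕ} (π : Equiv.Perm (Fin N)) : ℕ :=
  (Finset.univ.filter (fun p : Fin N × Fin N => p.1 < p.2 ∧ π p.2 < π p.1)).card

/-- Position `j` is a left-to-right maximum of `π`. -/
def IsLRMax {N : ℕ} (π : Equiv.Perm (Fin N)) (j : Fin N) : Prop :=
  ∀ i, i < j → π i < π j

/-- `π` is `k`-winnable: the positional strategy that rejects the first `k`
candidates (positions `0,…,k-1`) and accepts the next left-to-right maximum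
thereafter selects the position of the maximal value. -/
def KWinnable {N : ℕ} (k : ℕ) (π : Equiv.Perm (Fin N)) : Prop :=
  ∃ j : Fin N, k ≤ (j : ℕ) ∧ IsLRMax π j ∧ (∀ i, π i ≤ π j) ∧
    ∀ i : Fin N, k ≤ (i : ℕ) → i < j → ¬ IsLRMax π i

open Classical in
/-- Ewens-weighted count of `k`-winnable permutations:
`W(N,k) = Σ_{k-winnable π ∈ S_N} θ^{lrmax(π)}`. -/
noncomputable def W (R : Type*) [CommRing R] (N k : ℕ) (θ : R) : R :=
  ∑ π ∈ Finset.univ.filter (fun π : Equiv.Perm (Fin N) => KWinnable k π),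
    θ ^ lrmaxCount π


open Finset Equiv Fin

variable {m : ℕ}

def glue (σ : Equiv.Perm (Fin m)) (v : Fin (m+1)) : Equiv.Perm (Fin (m+1)) :=
  finSuccEquivLast.trans ((Equiv.optionCongr σ).trans (finSuccEquiv' v).symm)

@[simp] lemma glue_castSucc (σ : Equiv.Perm (Fin m)) (v : Fin (m+1)) (i : Fin m) :
    glue σ v i.castSucc = v.succAbove (σ i) := by
  simp [glue, finSuccEquivLast_castSucc]

@[simp] lemma glue_last (σ : Equiv.Perm (Fin m)) (v : Fin (m+1)) :
    glue σ v (Fin.last m) = v := by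
  simp [glue, finSuccEquivLast_last]

lemma glue_bijective : Function.Bijective (fun p : Equiv.Perm (Fin m) × Fin (m+1) => glue p.1 p.2) := by
  rw [Fintype.bijective_iff_injective_and_card]
  constructor
  · rintro ⟨σ, v⟩ ⟨σ', v'⟩ hσ
    simp only at hσ
    have hv : v = v' := by
      have := congrArg (fun π : Equiv.Perm (Fin (m+1)) => π (Fin.last m)) hσ
      simpa using this
    subst hv
    have hσ' : σ = σ' := by
      ext i
      have := congrArg (fun π : Equiv.Perm (Fin (m+1)) => π i.castSucc) hσ
      simp only [glue_castSucc] at this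
      exact congrArg _ (Fin.succAbove_right_injective this)
    simp [hσ']
  · simp [Fintype.card_perm, Nat.factorial_succ, Nat.mul_comm]

lemma lt_last_cases {i : Fin (m+1)} (h : i ≠ Fin.last m) : ∃ j : Fin m, i = j.castSucc := by
  exact ⟨i.castPred h, (Fin.castSucc_castPred i h).symm⟩

lemma isLRMax_glue_castSucc (σ : Equiv.Perm (Fin m)) (v : Fin (m+1)) (i : Fin m) :
    IsLRMax (glue σ v) i.castSucc ↔ IsLRMax σ i := by
  constructor
  · intro h t ht
    have := h t.castSucc (by simpa using ht)
    simpa [Fin.succAbove_lt_succAbove_iff] using this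
  · intro h t ht
    have htl : t ≠ Fin.last m := by
      intro hl
      subst hl
      exact absurd (lt_of_lt_of_le ht (Fin.le_last _)) (lt_irrefl _)
    obtain ⟨t', rfl⟩ := lt_last_cases htl
    have ht' : t' < i := by simpa using ht
    simpa [Fin.succAbove_lt_succAbove_iff] using h t' ht'

lemma isLRMax_glue_last (σ : Equiv.Perm (Fin m)) (v : Fin (m+1)) :
    IsLRMax (glue σ v) (Fin.last m) ↔ v = Fin.last m := by
  constructor
  · intro h
    by_contra hv
    obtain ⟨z, hz⟩ := Fin.exists_succAbove_eq (Ne.symm hv : Fin.last m ≠ v)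
    have := h (σ.symm z).castSucc (Fin.castSucc_lt_last _)
    simp only [glue_castSucc, glue_last, Equiv.apply_symm_apply, hz] at this
    exact absurd (lt_of_le_of_lt (Fin.le_last v) this) (lt_irrefl _)
  · rintro rfl t ht
    obtain ⟨t', rfl⟩ := lt_last_cases (Fin.ne_last_of_lt ht)
    simp only [glue_castSucc, glue_last]
    exact lt_of_le_of_ne (Fin.le_last _) (Fin.succAbove_ne _ _)

lemma max_glue_castSucc (σ : Equiv.Perm (Fin m)) (v : Fin (m+1)) (i : Fin m) :
    (∀ t, glue σ v t ≤ glue σ v i.castSucc) ↔ (v ≠ Fin.last m ∧ ∀ t, σ t ≤ σ i) := by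
  constructor
  · intro h
    constructor
    · intro hv
      subst hv
      have := h (Fin.last m)
      simp only [glue_last, glue_castSucc] at this
      exact absurd (lt_of_le_of_ne this (Ne.symm (Fin.succAbove_ne _ _)))
        (not_lt.mpr (Fin.le_last _))
    · intro t
      have := h t.castSucc
      simpa [Fin.succAbove_le_succAbove_iff] using this
  · rintro ⟨hv, h⟩ t
    by_cases htl : t = Fin.last m
    · subst htl
      simp only [glue_last, glue_castSucc]
      obtain ⟨z, hz⟩ := Fin.exists_succAbove_eq (Ne.symm hv : Fin.last m ≠ v)
      calc v ≤ Fin.last m := Fin.le_last v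
        _ = v.succAbove z := hz.symm
        _ = v.succAbove (σ (σ.symm z)) := by rw [Equiv.apply_symm_apply]
        _ ≤ v.succAbove (σ i) := by
            rw [Fin.succAbove_le_succAbove_iff]; exact h _
    · obtain ⟨t', rfl⟩ := lt_last_cases htl
      simpa [Fin.succAbove_le_succAbove_iff] using h t'

lemma max_glue_last (σ : Equiv.Perm (Fin m)) (v : Fin (m+1)) :
    (∀ t, glue σ v t ≤ glue σ v (Fin.last m)) ↔ v = Fin.last m := by
  constructor
  · intro h
    by_contra hv
    obtain ⟨z, hz⟩ := Fin.exists_succAbove_eq (Ne.symm hv : Fin.last m ≠ v)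
    have := h (σ.symm z).castSucc
    simp only [glue_castSucc, glue_last, Equiv.apply_symm_apply, hz] at this
    exact hv (le_antisymm (Fin.le_last _) this)
  · rintro rfl t
    simp only [glue_last]
    exact Fin.le_last _

open Classical in
lemma lrmaxCount_glue (σ : Equiv.Perm (Fin m)) (v : Fin (m+1)) :
    lrmaxCount (glue σ v) = lrmaxCount σ + (if v = Fin.last m then 1 else 0) := by
  classical
  have h1 : ∀ {n : ℕ} (π : Equiv.Perm (Fin n)),
      lrmaxCount π = ∑ j : Fin n, (if IsLRMax π j then 1 else 0) := by
    intro n π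
    rw [lrmaxCount, Finset.card_filter]
    exact Finset.sum_congr rfl (fun j _ => by simp [IsLRMax]; congr)
  rw [h1, h1, Fin.sum_univ_castSucc]
  congr 1
  · exact Finset.sum_congr rfl (fun i _ => by simp [isLRMax_glue_castSucc])
  · simp [isLRMax_glue_last]

section Sums
variable {R : Type*} [CommRing R]

open Classical in
noncomputable def Fsum (R : Type*) [CommRing R] (m : ℕ) (θ : R) : R :=
  ∑ π : Equiv.Perm (Fin m), θ ^ lrmaxCount π

open Classical in
noncomputable def wsum (R : Type*) [CommRing R] (m : ℕ) (θ : R)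
    (P : Equiv.Perm (Fin m) → Prop) : R :=
  ∑ π : Equiv.Perm (Fin m), if P π then θ ^ lrmaxCount π else 0

open Classical in
lemma sum_glue_split (θ : R) (P : Equiv.Perm (Fin (m+1)) → Prop) :
    wsum R (m+1) θ P =
      ∑ σ : Equiv.Perm (Fin m), ∑ v : Fin (m+1),
        if P (glue σ v) then θ ^ lrmaxCount σ * (if v = Fin.last m then θ else 1) else 0 := by
  classical
  rw [wsum, ← Fintype.sum_bijective _ glue_bijective _ _ (fun p => rfl), Fintype.sum_prod_type]
  refine Finset.sum_congr rfl fun σ _ => Finset.sum_congr rfl fun v _ => ?_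
  by_cases hP : P (glue σ v) <;> simp [hP, lrmaxCount_glue, pow_succ]
  by_cases hv : v = Fin.last m <;> simp [hv, pow_succ]

open Classical in
lemma wsum_glue_ne_last (θ : R) (P : Equiv.Perm (Fin (m+1)) → Prop)
    (Q : Equiv.Perm (Fin m) → Prop)
    (h : ∀ σ v, P (glue σ v) ↔ (v ≠ Fin.last m ∧ Q σ)) :
    wsum R (m+1) θ P = m * wsum R m θ Q := by
  classical
  rw [sum_glue_split, wsum, Finset.mul_sum]
  refine Finset.sum_congr rfl fun σ _ => ?_
  by_cases hQ : Q σ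
  · simp only [h, hQ, and_true]
    have step : ∀ v : Fin (m+1),
        (if v ≠ Fin.last m then θ ^ lrmaxCount σ * (if v = Fin.last m then θ else 1) else 0)
          = θ ^ lrmaxCount σ - (if v = Fin.last m then θ ^ lrmaxCount σ else 0) := by
      intro v; by_cases hv : v = Fin.last m <;> simp [hv]
    rw [Finset.sum_congr rfl (fun v _ => step v), Finset.sum_sub_distrib,
      Finset.sum_const, Finset.sum_ite_eq' Finset.univ]
    simp only [Finset.mem_univ, if_pos, Finset.card_univ, Fintype.card_fin, nsmul_eq_mul]
    push_cast
    ring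
  · simp [h, hQ]

open Classical in
lemma wsum_glue_eq_last (θ : R) (P : Equiv.Perm (Fin (m+1)) → Prop)
    (Q : Equiv.Perm (Fin m) → Prop)
    (h : ∀ σ v, P (glue σ v) ↔ (v = Fin.last m ∧ Q σ)) :
    wsum R (m+1) θ P = θ * wsum R m θ Q := by
  classical
  rw [sum_glue_split, wsum, Finset.mul_sum]
  refine Finset.sum_congr rfl fun σ _ => ?_
  by_cases hQ : Q σ
  · simp only [h, hQ, and_true]
    have step : ∀ v : Fin (m+1),
        (if v = Fin.last m then θ ^ lrmaxCount σ * (if v = Fin.last m then θ else 1) else 0)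
          = (if v = Fin.last m then θ ^ lrmaxCount σ * θ else 0) := by
      intro v; by_cases hv : v = Fin.last m <;> simp [hv]
    rw [Finset.sum_congr rfl (fun v _ => step v), Finset.sum_ite_eq' Finset.univ]
    simp [mul_comm]
  · simp [h, hQ]

open Classical in
lemma wsum_true (m : ℕ) (θ : R) : wsum R m θ (fun _ => True) = Fsum R m θ := by
  simp [wsum, Fsum]

open Classical in
lemma Fsum_succ (m : ℕ) (θ : R) : Fsum R (m+1) θ = (θ + m) * Fsum R m θ := by
  classical
  rw [← wsum_true, sum_glue_split, Fsum, Finset.mul_sum]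
  refine Finset.sum_congr rfl fun σ _ => ?_
  simp only [if_pos trivial]
  rw [← Finset.mul_sum]
  have step : ∀ v : Fin (m+1), (if v = Fin.last m then θ else 1) = 1 + (if v = Fin.last m then θ - 1 else 0) := by
    intro v; by_cases hv : v = Fin.last m <;> simp [hv]
  rw [Finset.sum_congr rfl (fun v _ => step v), Finset.sum_add_distrib, Finset.sum_const,
    Finset.sum_ite_eq' Finset.univ]
  simp only [Finset.mem_univ, if_pos, Finset.card_univ, Fintype.card_fin, nsmul_eq_mul, mul_one]
  push_cast
  ring

end Sums

section Preds

def PA (k : ℕ) {m : ℕ} (π : Equiv.Perm (Fin m)) : Prop :=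
  ∃ i : Fin m, (i : ℕ) = k ∧ ∀ t, π t ≤ π i

def PB (k j : ℕ) {m : ℕ} (π : Equiv.Perm (Fin m)) : Prop :=
  ∃ jj : Fin m, (jj : ℕ) = j ∧ (∀ t, π t ≤ π jj) ∧
    ∃ ik : Fin m, (ik : ℕ) = k ∧ ∀ i, i < jj → i ≠ ik → π i < π ik

variable {m k j : ℕ}

lemma ne_last_of_val_eq {i : Fin (m+1)} {k : ℕ} (hik : (i : ℕ) = k) (hk : k < m) :
    i ≠ Fin.last m := by
  intro hl; rw [hl, Fin.val_last] at hik; omega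

lemma PA_glue_iff (hk : k < m) (σ : Equiv.Perm (Fin m)) (v : Fin (m+1)) :
    PA k (glue σ v) ↔ (v ≠ Fin.last m ∧ PA k σ) := by
  constructor
  · rintro ⟨i, hik, hmax⟩
    obtain ⟨i', rfl⟩ := lt_last_cases (ne_last_of_val_eq hik hk)
    rw [max_glue_castSucc] at hmax
    exact ⟨hmax.1, i', by simpa using hik, hmax.2⟩
  · rintro ⟨hv, i', hik, hmax⟩
    exact ⟨i'.castSucc, by simpa using hik, (max_glue_castSucc σ v i').mpr ⟨hv, hmax⟩⟩

lemma PA_glue_base (σ : Equiv.Perm (Fin k)) (v : Fin (k+1)) :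
    PA k (glue σ v) ↔ (v = Fin.last k ∧ True) := by
  simp only [and_true]
  constructor
  · rintro ⟨i, hik, hmax⟩
    have : i = Fin.last k := by
      ext; rw [hik, Fin.val_last]
    subst this
    exact (max_glue_last σ v).mp hmax
  · intro hv
    exact ⟨Fin.last k, Fin.val_last k, (max_glue_last σ v).mpr hv⟩

lemma PB_glue_iff (hkj : k < j) (hj : j < m) (σ : Equiv.Perm (Fin m)) (v : Fin (m+1)) :
    PB k j (glue σ v) ↔ (v ≠ Fin.last m ∧ PB k j σ) := by
  constructor
  · rintro ⟨jj, hjj, hmax, ik, hik, hlt⟩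
    obtain ⟨jj', rfl⟩ := lt_last_cases (ne_last_of_val_eq hjj hj)
    obtain ⟨ik', rfl⟩ := lt_last_cases (ne_last_of_val_eq hik (lt_trans hkj hj))
    rw [max_glue_castSucc] at hmax
    refine ⟨hmax.1, jj', by simpa using hjj, hmax.2, ik', by simpa using hik, ?_⟩
    intro i hi hne
    have := hlt i.castSucc (by simpa using hi) (by simpa using hne)
    simpa [Fin.succAbove_lt_succAbove_iff] using this
  · rintro ⟨hv, jj', hjj, hmax, ik', hik, hlt⟩
    refine ⟨jj'.castSucc, by simpa using hjj,
      (max_glue_castSucc σ v jj').mpr ⟨hv, hmax⟩, ik'.castSucc, by simpa using hik, ?_⟩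
    intro i hi hne
    have hil : i ≠ Fin.last m := Fin.ne_last_of_lt hi
    obtain ⟨i', rfl⟩ := lt_last_cases hil
    have := hlt i' (by simpa using hi) (by simpa using hne)
    simpa [Fin.succAbove_lt_succAbove_iff] using this

lemma PB_glue_base (hkj : k < j) (σ : Equiv.Perm (Fin j)) (v : Fin (j+1)) :
    PB k j (glue σ v) ↔ (v = Fin.last j ∧ PA k σ) := by
  constructor
  · rintro ⟨jj, hjj, hmax, ik, hik, hlt⟩
    have : jj = Fin.last j := by ext; rw [hjj, Fin.val_last]
    subst this
    obtain ⟨ik', rfl⟩ := lt_last_cases (ne_last_of_val_eq hik hkj)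
    refine ⟨(max_glue_last σ v).mp hmax, ik', by simpa using hik, ?_⟩
    intro t
    rcases eq_or_ne t ik' with rfl | hne
    · exact le_refl _
    · have := hlt t.castSucc (Fin.castSucc_lt_last _) (by simpa using hne)
      simp only [glue_castSucc, Fin.succAbove_lt_succAbove_iff] at this
      exact le_of_lt this
  · rintro ⟨hv, ik', hik, hmax⟩
    refine ⟨Fin.last j, Fin.val_last j, (max_glue_last σ v).mpr hv,
      ik'.castSucc, by simpa using hik, ?_⟩
    intro i hi hne
    obtain ⟨i', rfl⟩ := lt_last_cases (Fin.ne_last_of_lt hi)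
    have hne' : i' ≠ ik' := by simpa using hne
    have : σ i' < σ ik' := lt_of_le_of_ne (hmax i') (fun hEq => hne' (σ.injective hEq))
    simpa [Fin.succAbove_lt_succAbove_iff] using this

end Preds

section Closed
variable {R : Type*} [CommRing R]

open Classical in
lemma Fsum_eq (m : ℕ) (θ : R) : Fsum R m θ = ∏ i ∈ Finset.range m, (θ + i) := by
  induction m with
  | zero =>
    rw [Fsum]
    rw [Finset.sum_eq_single 1]
    · simp [lrmaxCount]
    · intro b _ hb
      exact absurd (Subsingleton.elim b 1) hb
    · simp
  | succ n ih =>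
    rw [Fsum_succ, ih, Finset.prod_range_succ]
    ring

open Classical in
lemma SA_closed (k t : ℕ) (θ : R) :
    wsum R (k+1+t) θ (PA k) =
      (∏ i ∈ Finset.Ico (k+1) (k+1+t), (i : R)) * (θ * Fsum R k θ) := by
  induction t with
  | zero =>
    simp only [Nat.add_zero, Finset.Ico_self, Finset.prod_empty, one_mul]
    rw [wsum_glue_eq_last θ _ (fun _ => True) (fun σ v => PA_glue_base σ v), wsum_true]
  | succ t ih =>
    have : wsum R (k+1+t+1) θ (PA k) = (↑(k+1+t) : R) * wsum R (k+1+t) θ (PA k) :=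
      wsum_glue_ne_last θ _ _ (fun σ v => PA_glue_iff (by omega) σ v)
    rw [show k+1+(t+1) = k+1+t+1 from rfl, this, ih,
      Finset.prod_Ico_succ_top (by omega : k+1 ≤ k+1+t)]
    push_cast
    ring

open Classical in
lemma SB_closed {k j : ℕ} (hkj : k < j) (t : ℕ) (θ : R) :
    wsum R (j+1+t) θ (PB k j) =
      (∏ i ∈ Finset.Ico (j+1) (j+1+t), (i : R)) * (θ * wsum R j θ (PA k)) := by
  induction t with
  | zero =>
    simp only [Nat.add_zero, Finset.Ico_self, Finset.prod_empty, one_mul]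
    exact wsum_glue_eq_last θ _ _ (fun σ v => PB_glue_base hkj σ v)
  | succ t ih =>
    have : wsum R (j+1+t+1) θ (PB k j) = (↑(j+1+t) : R) * wsum R (j+1+t) θ (PB k j) :=
      wsum_glue_ne_last θ _ _ (fun σ v => PB_glue_iff hkj (by omega) σ v)
    rw [show j+1+(t+1) = j+1+t+1 from rfl, this, ih,
      Finset.prod_Ico_succ_top (by omega : j+1 ≤ j+1+t)]
    push_cast
    ring

open Classical in
lemma SA_closed' {k m : ℕ} (hkm : k < m) (θ : R) :
    wsum R m θ (PA k) = (∏ i ∈ Finset.Ico (k+1) m, (i : R)) * (θ * Fsum R k θ) := by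
  have h : m = k+1+(m-k-1) := by omega
  rw [h] at *
  exact SA_closed k (m-k-1) θ

open Classical in
lemma SB_closed' {k j m : ℕ} (hkj : k < j) (hjm : j < m) (θ : R) :
    wsum R m θ (PB k j) =
      (∏ i ∈ Finset.Ico (j+1) m, (i : R)) * (θ * ((∏ i ∈ Finset.Ico (k+1) j, (i : R)) * (θ * Fsum R k θ))) := by
  have h : m = j+1+(m-j-1) := by omega
  rw [h] at *
  rw [SB_closed hkj (m-j-1) θ, SA_closed' hkj θ]

end Closed

section Char
variable {N k : ℕ}

lemma max_unique (π : Equiv.Perm (Fin N)) {a b : Fin N}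
    (ha : ∀ t, π t ≤ π a) (hb : ∀ t, π t ≤ π b) : a = b :=
  π.injective (le_antisymm (hb a) (ha b))

lemma kwinnable_iff' (π : Equiv.Perm (Fin N)) :
    KWinnable k π ↔ ∃ j₀ : Fin N, (∀ t, π t ≤ π j₀) ∧ k ≤ (j₀ : ℕ) ∧
      ∀ i : Fin N, k ≤ (i : ℕ) → i < j₀ → ¬ IsLRMax π i := by
  constructor
  · rintro ⟨j, hkj, _, hmax, hno⟩
    exact ⟨j, hmax, hkj, hno⟩
  · rintro ⟨j, hmax, hkj, hno⟩
    refine ⟨j, hkj, ?_, hmax, hno⟩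
    intro i hi
    exact lt_of_le_of_ne (hmax i) (fun hEq => (ne_of_lt hi) (π.injective hEq))

lemma diff_A (π : Equiv.Perm (Fin N)) :
    (KWinnable k π ∧ ¬ KWinnable (k+1) π) ↔ PA k π := by
  rw [kwinnable_iff', kwinnable_iff']
  constructor
  · rintro ⟨⟨j, hmax, hkj, hno⟩, hnot⟩
    refine ⟨j, ?_, hmax⟩
    by_contra hne
    have hklt : k + 1 ≤ (j : ℕ) := by omega
    exact hnot ⟨j, hmax, hklt, fun i hi hij => hno i (by omega) hij⟩
  · rintro ⟨i, hik, hmax⟩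
    constructor
    · exact ⟨i, hmax, by omega, fun i' hi' hii' hlr => by
        have : (i' : ℕ) < (i : ℕ) := hii'
        omega⟩
    · rintro ⟨j, hmax', hkj, _⟩
      rw [max_unique π hmax' hmax] at hkj
      omega

lemma diff_B (π : Equiv.Perm (Fin N)) :
    (KWinnable (k+1) π ∧ ¬ KWinnable k π) ↔
      ∃ j ∈ Finset.Icc (k+1) (N-1), PB k j π := by
  rw [kwinnable_iff', kwinnable_iff']
  constructor
  · rintro ⟨⟨j, hmax, hkj, hno⟩, hnot⟩
    -- there must be an LR max at position exactly k
    have hex : ∃ i : Fin N, k ≤ (i : ℕ) ∧ i < j ∧ IsLRMax π i := by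
      by_contra hne
      push_neg at hne
      exact hnot ⟨j, hmax, by omega, fun i hi hij hlr => hne i hi hij hlr⟩
    obtain ⟨ik, hik, hikj, hiklr⟩ := hex
    have hikk : (ik : ℕ) = k := by
      by_contra hne
      exact hno ik (by omega) hikj hiklr
    refine ⟨(j : ℕ), Finset.mem_Icc.mpr ⟨by omega, by omega⟩, j, rfl, hmax, ik, hikk, ?_⟩
    -- minimal counterexample argument
    intro i hij hne
    by_contra hnlt
    have hgt : π ik < π i :=
      lt_of_le_of_ne (not_lt.mp hnlt) (fun hEq => hne (π.injective hEq.symm))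
    classical
    set s : Finset (Fin N) := Finset.univ.filter (fun t => t < j ∧ π ik < π t) with hs
    have hsne : s.Nonempty := ⟨i, by simp [hs, hij, hgt]⟩
    set t₀ := s.min' hsne with ht₀
    have ht₀s : t₀ ∈ s := s.min'_mem hsne
    simp only [hs, Finset.mem_filter] at ht₀s
    have ht₀lr : IsLRMax π t₀ := by
      intro u hu
      by_contra hnu
      have hul : π t₀ ≤ π u := not_lt.mp hnu
      have hus : u ∈ s := by
        simp only [hs, Finset.mem_filter]
        exact ⟨Finset.mem_univ u, lt_trans hu ht₀s.2.1, lt_of_lt_of_le ht₀s.2.2 hul⟩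
      exact absurd (s.min'_le u hus) (not_le.mpr hu)
    have hikt₀ : ik < t₀ := by
      rcases lt_trichotomy ik t₀ with hlt | heq | hgt'
      · exact hlt
      · exact absurd heq (fun hEq => by rw [hEq] at ht₀s; exact lt_irrefl _ ht₀s.2.2)
      · exact absurd (hiklr t₀ hgt') (not_lt.mpr (le_of_lt ht₀s.2.2))
    exact hno t₀ (by omega) ht₀s.2.1 ht₀lr
  · rintro ⟨j, hjIcc, jj, hjj, hmax, ik, hik, hlt⟩
    rw [Finset.mem_Icc] at hjIcc
    have hikjj : ik < jj := by
      have : (ik : ℕ) < (jj : ℕ) := by omega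
      exact this
    constructor
    · refine ⟨jj, hmax, by omega, ?_⟩
      intro i hi hij hlr
      have hneik : i ≠ ik := fun hEq => by rw [hEq] at hi; omega
      have := hlt i hij hneik
      have hiki : ik < i := by
        have : (ik : ℕ) < (i : ℕ) := by omega
        exact this
      exact absurd (hlr ik hiki) (not_lt.mpr (le_of_lt this))
    · rintro ⟨j₀, hmax', hkj₀, hno⟩
      have hj₀ : j₀ = jj := max_unique π hmax' hmax
      subst hj₀
      refine hno ik (by omega) hikjj ?_
      intro u hu
      have hune : u ≠ ik := ne_of_lt hu
      exact hlt u (lt_trans hu hikjj) hune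

lemma PB_unique {j j' : ℕ} (π : Equiv.Perm (Fin N)) (h : PB k j π) (h' : PB k j' π) :
    j = j' := by
  obtain ⟨jj, hjj, hmax, -⟩ := h
  obtain ⟨jj', hjj', hmax', -⟩ := h'
  rw [← hjj, ← hjj', max_unique π hmax hmax']

end Char

open Classical in
lemma W_eq_wsum (R : Type*) [CommRing R] (N k : ℕ) (θ : R) :
    W R N k θ = wsum R N θ (KWinnable k) := by
  classical
  rw [W, wsum, Finset.sum_filter]

open Classical in
lemma deltaW (K : Type*) [Field K] [CharZero K] (N k : ℕ) (h : k + 2 ≤ N) (θ : K) :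
    W K N (k + 1) θ - W K N k θ =
      (∏ j ∈ Finset.Icc (k + 1) (N - 1), (j : K)) *
        ((∑ i ∈ Finset.Icc (k + 1) (N - 1), (1 : K) / i) * θ - 1) * θ *
        ∏ j ∈ Finset.range k, (θ + j) := by
  classical
  rw [W_eq_wsum, W_eq_wsum]
  -- step 1: pointwise difference
  have step1 : wsum K N θ (KWinnable (k+1)) - wsum K N θ (KWinnable k) =
      wsum K N θ (fun π => ∃ j ∈ Finset.Icc (k+1) (N-1), PB k j π)
        - wsum K N θ (PA k) := by
    rw [wsum, wsum, wsum, wsum, ← Finset.sum_sub_distrib, ← Finset.sum_sub_distrib]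
    refine Finset.sum_congr rfl fun π _ => ?_
    rw [← diff_B π, ← diff_A π]
    by_cases h1 : KWinnable (k+1) π <;> by_cases h2 : KWinnable k π <;>
      simp [h1, h2]
  rw [step1]
  -- step 2: split the B-sum over j
  have step2 : wsum K N θ (fun π => ∃ j ∈ Finset.Icc (k+1) (N-1), PB k j π) =
      ∑ j ∈ Finset.Icc (k+1) (N-1), wsum K N θ (PB k j) := by
    simp only [wsum]
    rw [Finset.sum_comm]
    refine Finset.sum_congr rfl fun π _ => ?_
    by_cases hex : ∃ j ∈ Finset.Icc (k+1) (N-1), PB k j π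
    · obtain ⟨j0, hj0s, hj0⟩ := hex
      rw [if_pos ⟨j0, hj0s, hj0⟩, Finset.sum_eq_single j0]
      · rw [if_pos hj0]
      · intro b _ hb
        rw [if_neg (fun hPB => hb (PB_unique π hPB hj0))]
      · intro habs
        exact absurd hj0s habs
    · rw [if_neg hex]
      refine (Finset.sum_eq_zero fun j hj => ?_).symm
      rw [if_neg (fun hPB => hex ⟨j, hj, hPB⟩)]
  rw [step2]
  -- step 3: closed forms
  have hIcc : Finset.Icc (k+1) (N-1) = Finset.Ico (k+1) N := by
    rw [← Finset.Ico_add_one_right_eq_Icc, Nat.sub_add_cancel (by omega : 1 ≤ N)]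
  have hSA : wsum K N θ (PA k) =
      (∏ i ∈ Finset.Ico (k+1) N, (i : K)) * (θ * Fsum K k θ) :=
    SA_closed' (by omega) θ
  set C : K := ∏ i ∈ Finset.Ico (k+1) N, (i : K) with hC
  have hterm : ∀ j ∈ Finset.Icc (k+1) (N-1),
      wsum K N θ (PB k j) = C * (1 / (j : K)) * (θ * θ * Fsum K k θ) := by
    intro j hj
    rw [Finset.mem_Icc] at hj
    have hkj : k < j := by omega
    have hjN : j < N := by omega
    rw [SB_closed' hkj hjN θ]
    have hsplit : C = (∏ i ∈ Finset.Ico (k+1) j, (i : K)) *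
        ((j : K) * ∏ i ∈ Finset.Ico (j+1) N, (i : K)) := by
      rw [hC, ← Finset.prod_Ico_consecutive (fun i => (i : K)) (by omega : k+1 ≤ j) (by omega : j ≤ N),
        Finset.prod_eq_prod_Ico_succ_bot (by omega : j < N)]
    have hjne : (j : K) ≠ 0 := Nat.cast_ne_zero.mpr (by omega)
    field_simp [hsplit]
    rw [hsplit]
    ring
  rw [Finset.sum_congr rfl hterm, ← Finset.sum_mul, ← Finset.mul_sum, hSA, hIcc,
    Fsum_eq]
  ring

/-- closed form for `ΔW(N,k) = W(N,k+1) − W(N,k)` in the Ewens model: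
`ΔW(N,k) = (∏_{j=k+1}^{N−1} j)·((Σ_{i=k+1}^{N−1} 1/i)·θ − 1)·θ·θ(θ+1)⋯(θ+k−1)`.
In particular, as a polynomial in `θ` it has only real roots, and its unique
positive root is `θ = (Σ_{i=k+1}^{N−1} 1/i)⁻¹`. -/
theorem ewens_deltaW_closed_form (N k : ℕ) (h : k + 2 ≤ N) :
    (∀ θ : ℝ, W ℝ N (k + 1) θ - W ℝ N k θ =
      (∏ j ∈ Finset.Icc (k + 1) (N - 1), (j : ℝ)) *
        ((∑ i ∈ Finset.Icc (k + 1) (N - 1), (1 : ℝ) / i) * θ - 1) * θ *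
        ∏ j ∈ Finset.range k, (θ + j)) ∧
    (∀ z : ℂ, W ℂ N (k + 1) z - W ℂ N k z = 0 → z.im = 0) ∧
    (∀ θ : ℝ, 0 < θ →
      (W ℝ N (k + 1) θ - W ℝ N k θ = 0 ↔
        θ = (∑ i ∈ Finset.Icc (k + 1) (N - 1), (1 : ℝ) / i)⁻¹)) := by
  have hne : k + 1 ≤ N - 1 := by omega
  refine ⟨fun θ => deltaW ℝ N k h θ, ?_, ?_⟩
  · intro z hz
    rw [deltaW ℂ N k h z] at hz
    have hC : (∏ j ∈ Finset.Icc (k + 1) (N - 1), (j : ℂ)) ≠ 0 :=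
      Finset.prod_ne_zero_iff.mpr (fun i hi => Nat.cast_ne_zero.mpr (by
        rw [Finset.mem_Icc] at hi; omega))
    rcases mul_eq_zero.mp hz with h1 | hP
    · rcases mul_eq_zero.mp h1 with h2 | hz0
      · rcases mul_eq_zero.mp h2 with h3 | hA
        · exact absurd h3 hC
        · -- (Σ 1/i) * z - 1 = 0
          set Sr : ℝ := ∑ i ∈ Finset.Icc (k + 1) (N - 1), (1 : ℝ) / i with hSr
          have hScast : (∑ i ∈ Finset.Icc (k + 1) (N - 1), (1 : ℂ) / i) = ((Sr : ℝ) : ℂ) := by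
            rw [hSr]
            push_cast
            rfl
          have hSpos : 0 < Sr := by
            refine Finset.sum_pos (fun i hi => ?_) ⟨k + 1, Finset.mem_Icc.mpr ⟨le_refl _, hne⟩⟩
            rw [Finset.mem_Icc] at hi
            have hi0 : (0 : ℝ) < i := by exact_mod_cast (by omega : 0 < i)
            positivity
          have hz1 : ((Sr : ℝ) : ℂ) * z = 1 := by
            rw [← hScast]
            linear_combination hA
          have hz2 : z = ((Sr : ℝ) : ℂ)⁻¹ := eq_inv_of_mul_eq_one_left (by linear_combination hz1)
          rw [hz2, ← Complex.ofReal_inv]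
          exact Complex.ofReal_im _
      · rw [hz0]
        rfl
    · obtain ⟨j, -, hj⟩ := Finset.prod_eq_zero_iff.mp hP
      have : z = -(j : ℂ) := by linear_combination hj
      rw [this]
      simp
  · intro θ hθ
    rw [deltaW ℝ N k h θ]
    set Sr : ℝ := ∑ i ∈ Finset.Icc (k + 1) (N - 1), (1 : ℝ) / i with hSr
    have hSpos : 0 < Sr := by
      refine Finset.sum_pos (fun i hi => ?_) ⟨k + 1, Finset.mem_Icc.mpr ⟨le_refl _, hne⟩⟩
      rw [Finset.mem_Icc] at hi
      have hi0 : (0 : ℝ) < i := by exact_mod_cast (by omega : 0 < i)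
      positivity
    have hCpos : 0 < ∏ j ∈ Finset.Icc (k + 1) (N - 1), (j : ℝ) :=
      Finset.prod_pos (fun i hi => by
        rw [Finset.mem_Icc] at hi
        exact_mod_cast (by omega : 0 < i))
    have hPpos : 0 < ∏ j ∈ Finset.range k, (θ + (j : ℝ)) :=
      Finset.prod_pos (fun j _ => by positivity)
    constructor
    · intro h0
      have hA : Sr * θ - 1 = 0 := by
        rcases mul_eq_zero.mp h0 with h1 | hP
        · rcases mul_eq_zero.mp h1 with h2 | hz0
          · rcases mul_eq_zero.mp h2 with h3 | hA
            · exact absurd h3 (ne_of_gt hCpos)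
            · exact hA
          · exact absurd hz0 (ne_of_gt hθ)
        · exact absurd hP (ne_of_gt hPpos)
      exact eq_inv_of_mul_eq_one_left (by linear_combination hA)
    · intro hθeq
      have h1 : Sr * θ - 1 = 0 := by
        rw [hθeq, mul_inv_cancel₀ (ne_of_gt hSpos)]
        ring
      rw [h1]
      ring
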